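/- Under the setup of the strong MNAR assumption (all missing values of Y fall below F^{-1}(α), and the composite variable U equals Y when observed and a constant c < F^{-1}(α) when missing), the trimmed mean of U equals the trimmed mean of Y: E[U | U > F_U^{-1}(α)] = E[Y | Y > F^{-1}(α)]. -/

import Mathlib

open MeasureTheory ProbabilityTheory Set
open Filter Topology

set_option maxHeartbeats 1000000

lemma stieltjes_quant_le (G : StieltjesFunction ℝ) (α : ℝ)
    (hne : {x | α ≤ G x}.Nonempty) (hbd : BddBelow {x | α ≤ G x}) :
    α ≤ G (sInf {x | α ≤ G x}) := by
  set q := sInf {x | α ≤ G x} with hq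
  have hIoi : ∀ x, q < x → α ≤ G x := by
    intro x hx
    obtain ⟨s, hs, hsx⟩ := exists_lt_of_csInf_lt hne hx
    exact le_trans hs (G.mono hsx.le)
  have hc : Filter.Tendsto G (𝓝[>] q) (𝓝 (G q)) :=
    ((G.right_continuous q).tendsto).mono_left (nhdsWithin_mono _ Ioi_subset_Ici_self)
  exact ge_of_tendsto hc (eventually_nhdsWithin_of_forall fun x hx => hIoi x hx)

lemma stieltjes_quant_ge (G : StieltjesFunction ℝ) (α q : ℝ)
    (h0 : G.measure {q} = 0) (hlt : ∀ x < q, G x ≤ α) : G q ≤ α := by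
  have hL : Filter.Tendsto G (𝓝[<] q) (𝓝 (Function.leftLim G q)) := G.mono.tendsto_leftLim q
  have h1 : Function.leftLim G q ≤ α :=
    le_of_tendsto hL (eventually_nhdsWithin_of_forall fun x hx => hlt x hx)
  have h2 : G q ≤ Function.leftLim G q := by
    have h3 := G.measure_singleton q
    rw [h0] at h3
    have := ENNReal.ofReal_eq_zero.mp h3.symm
    linarith
  linarith

lemma no_atom_of_density {Ω : Type*} [MeasurableSpace Ω] (μ : Measure Ω) [IsProbabilityMeasure μ]
    (Y : Ω → ℝ) (f : ℝ → ℝ) (hY : Measurable Y)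
    (hYd : ∀ x, μ {ω | Y ω ≤ x} = ENNReal.ofReal (∫ y in Iic x, f y)) (q : ℝ) :
    μ {ω | Y ω = q} = 0 := by
  by_cases h : IntegrableOn f (Iic q) volume
  · -- approximate from the left
    set a : ℕ → ℝ := fun n => q - 1 / (n + 1) with ha
    have ha_lt : ∀ n, a n < q := by
      intro n
      have : (0:ℝ) < 1 / (n + 1) := by positivity
      simp only [ha]; linarith
    have ha_mono : Monotone a := by
      intro m n hmn
      have : (1:ℝ) / (n + 1) ≤ 1 / (m + 1) := by
        apply one_div_le_one_div_of_le (by positivity)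
        exact_mod_cast by omega
      simp only [ha]; linarith
    have ha_tendsto : Filter.Tendsto a Filter.atTop (𝓝 q) := by
      rw [ha]
      have h0 : Filter.Tendsto (fun n : ℕ => 1 / ((n:ℝ) + 1)) Filter.atTop (𝓝 0) :=
        tendsto_one_div_add_atTop_nhds_zero_nat
      simpa using Filter.Tendsto.const_sub q h0
    -- measure convergence
    have hunion : {ω | Y ω < q} = ⋃ n, {ω | Y ω ≤ a n} := by
      ext ω
      simp only [mem_setOf_eq, mem_iUnion]
      constructor
      · intro hω
        obtain ⟨n, hn⟩ := (ha_tendsto.eventually (eventually_ge_nhds hω)).exists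
        exact ⟨n, hn⟩
      · intro ⟨n, hn⟩; exact lt_of_le_of_lt hn (ha_lt n)
    have hmeas_mono : Monotone fun n => {ω | Y ω ≤ a n} := by
      intro m n hmn ω hω
      exact le_trans hω (ha_mono hmn)
    have h1 : Filter.Tendsto (fun n => μ {ω | Y ω ≤ a n}) Filter.atTop (𝓝 (μ {ω | Y ω < q})) := by
      rw [hunion]
      exact tendsto_measure_iUnion_atTop hmeas_mono
    -- integral convergence
    have hint : ∀ n, IntegrableOn f (Iic (a n)) volume :=
      fun n => h.mono_set (Iic_subset_Iic.2 (ha_lt n).le)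
    have h2 : Filter.Tendsto (fun n => ∫ y in Iic (a n), f y) Filter.atTop
        (𝓝 (∫ y in Iic q, f y)) := by
      have hrw : ∀ n, ∫ y in Iic (a n), f y = ∫ y, (Iic (a n)).indicator f y := by
        intro n; rw [integral_indicator measurableSet_Iic]
      have hrw2 : ∫ y in Iic q, f y = ∫ y, (Iio q).indicator f y := by
        rw [integral_indicator measurableSet_Iio]
        exact (setIntegral_congr_set Iio_ae_eq_Iic).symm
      rw [hrw2]
      simp only [hrw]
      refine tendsto_integral_of_dominated_convergence (fun y => (Iic q).indicator (fun z => |f z|) y)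
        (fun n => ((hint n).integrable_indicator measurableSet_Iic).aestronglyMeasurable) ?_ ?_ ?_
      · exact IntegrableOn.integrable_indicator h.norm measurableSet_Iic
      · intro n
        filter_upwards with y
        by_cases hy : y ∈ Iic (a n)
        · rw [indicator_of_mem hy, indicator_of_mem (Iic_subset_Iic.2 (ha_lt n).le hy)]
          exact le_of_eq (Real.norm_eq_abs _)
        · rw [indicator_of_notMem hy, norm_zero]
          exact Set.indicator_nonneg (fun z _ => abs_nonneg _) y
      · filter_upwards with y
        by_cases hy : y < q
        · have hev : ∀ᶠ n in Filter.atTop, y ≤ a n :=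
            (ha_tendsto.eventually (eventually_ge_nhds hy)).mono fun n hn => hn
          have hev2 : (fun _ : ℕ => (Iio q).indicator f y) =ᶠ[Filter.atTop]
              (fun n => (Iic (a n)).indicator f y) := by
            filter_upwards [hev] with n hn
            rw [indicator_of_mem (mem_Iic.mpr hn), indicator_of_mem (mem_Iio.mpr hy)]
          exact Filter.Tendsto.congr' hev2 tendsto_const_nhds
        · have heq : ∀ n, (Iic (a n)).indicator f y = (Iio q).indicator f y := by
            intro n
            rw [indicator_of_notMem (fun hc => hy (lt_of_le_of_lt (mem_Iic.mp hc) (ha_lt n))),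
              indicator_of_notMem (fun hc => hy (mem_Iio.mp hc))]
          exact Filter.Tendsto.congr (fun n => (heq n).symm) tendsto_const_nhds
    have h3 : Filter.Tendsto (fun n => μ {ω | Y ω ≤ a n}) Filter.atTop (𝓝 (μ {ω | Y ω ≤ q})) := by
      simp only [hYd]
      exact (ENNReal.continuous_ofReal.tendsto _).comp h2
    have heq : μ {ω | Y ω < q} = μ {ω | Y ω ≤ q} := tendsto_nhds_unique h1 h3
    have hsub : {ω | Y ω < q} ⊆ {ω | Y ω ≤ q} := fun ω (hω : Y ω < q) => le_of_lt hω
    have hset : {ω | Y ω = q} = {ω | Y ω ≤ q} \ {ω | Y ω < q} := by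
      ext ω; simp only [mem_setOf_eq, mem_diff, not_lt]
      constructor
      · intro h'; exact ⟨le_of_eq h', by simp [h', mem_setOf_eq]⟩
      · intro ⟨h1', h2'⟩; exact le_antisymm h1' h2'
    rw [hset, measure_diff hsub (hY measurableSet_Iio).nullMeasurableSet (measure_ne_top μ _),
      heq, tsub_self]
  · have h0 : μ {ω | Y ω ≤ q} = 0 := by
      rw [hYd q, integral_undef h, ENNReal.ofReal_zero]
    exact measure_mono_null (fun ω (hω : Y ω = q) => le_of_eq hω) h0

noncomputable def quant (F : ℝ → ℝ) (α : ℝ) : ℝ := sInf {x | α ≤ F x}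

noncomputable def condMeanAbove {Ω : Type*} [MeasurableSpace Ω]
    (μ : Measure Ω) (X : Ω → ℝ) (q : ℝ) : ℝ :=
  (∫ ω in {ω | q < X ω}, X ω ∂μ) / (μ {ω | q < X ω}).toReal

theorem stmt4 {Ω : Type*} [MeasurableSpace Ω] (μ : Measure Ω) [IsProbabilityMeasure μ]
    (Y : Ω → ℝ) (R : Ω → Bool) (f : ℝ → ℝ) (α c : ℝ)
    (hY : Measurable Y) (hR : Measurable R)
    (hf0 : ∀ y, 0 ≤ f y)
    (hYd : ∀ x, μ {ω | Y ω ≤ x} = ENNReal.ofReal (∫ y in Iic x, f y))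
    (hmean : Integrable (fun y => y * f y))
    (hα : α ∈ Ioo (0:ℝ) 1)
    (hp : (μ {ω | R ω = false}).toReal ≤ α)
    (F : ℝ → ℝ) (hF : F = fun x => (μ {ω | Y ω ≤ x}).toReal)
    (hMNAR : ∀ᵐ ω ∂μ, R ω = false → Y ω < quant F α)
    (hc : c < quant F α)
    (U : Ω → ℝ) (hU : U = fun ω => if R ω then Y ω else c)
    (FU : ℝ → ℝ) (hFU : FU = fun x => (μ {ω | U ω ≤ x}).toReal) :
    condMeanAbove μ U (quant FU α) = condMeanAbove μ Y (quant F α) := by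
  obtain ⟨hα0, hα1⟩ := hα
  have hUm : Measurable U := by
    rw [hU]
    exact Measurable.ite (hR (measurableSet_singleton true)) hY measurable_const
  set ν := μ.map Y with hν
  set νU := μ.map U with hνU
  haveI : IsProbabilityMeasure ν := Measure.isProbabilityMeasure_map hY.aemeasurable
  haveI : IsProbabilityMeasure νU := Measure.isProbabilityMeasure_map hUm.aemeasurable
  have hFc : ∀ x, F x = cdf ν x := by
    intro x
    rw [hF, cdf_eq_real, measureReal_def, hν, Measure.map_apply hY measurableSet_Iic]
    rfl
  have hFUc : ∀ x, FU x = cdf νU x := by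
    intro x
    rw [hFU, cdf_eq_real, measureReal_def, hνU, Measure.map_apply hUm measurableSet_Iic]
    rfl
  set q := quant F α with hqdef
  set t := quant FU α with htdef
  have hSeq : {x | α ≤ F x} = {x | α ≤ (cdf ν : ℝ → ℝ) x} := by
    ext x; simp only [mem_setOf_eq, hFc]
  have hSUeq : {x | α ≤ FU x} = {x | α ≤ (cdf νU : ℝ → ℝ) x} := by
    ext x; simp only [mem_setOf_eq, hFUc]
  -- nonempty and bddBelow for S
  have hSne : {x | α ≤ F x}.Nonempty := by
    obtain ⟨x, hx⟩ := ((tendsto_cdf_atTop ν).eventually (Ioi_mem_nhds hα1)).exists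
    exact ⟨x, by rw [mem_setOf_eq, hFc]; exact le_of_lt hx⟩
  have hSbd : BddBelow {x | α ≤ F x} := by
    obtain ⟨B, hB⟩ := Filter.eventually_atBot.mp
      ((tendsto_cdf_atBot ν).eventually (Iio_mem_nhds hα0))
    refine ⟨B, fun x hx => ?_⟩
    by_contra hxB
    push_neg at hxB
    have := hB x hxB.le
    rw [mem_setOf_eq, hFc] at hx
    exact absurd hx (not_le.mpr this)
  -- F q = α
  have hFq_ge : α ≤ F q := by
    rw [hFc, hqdef]
    unfold quant
    rw [hSeq] at hSne hSbd ⊢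
    exact stieltjes_quant_le (cdf ν) α hSne hSbd
  have hq_lt : ∀ x, x < q → F x < α := by
    intro x hx
    by_contra h
    push_neg at h
    exact absurd (csInf_le hSbd h) (not_le.mpr hx)
  have hFq_le : F q ≤ α := by
    have hatom : ν {q} = 0 := by
      rw [hν, Measure.map_apply hY (measurableSet_singleton q)]
      exact no_atom_of_density μ Y f hY hYd q
    rw [hFc]
    refine stieltjes_quant_ge (cdf ν) α q ?_ (fun x hx => ?_)
    · rw [measure_cdf]; exact hatom
    · rw [← hFc]; exact (hq_lt x hx).le
  have hFq : F q = α := le_antisymm hFq_le hFq_ge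
  have hYq : μ {ω | Y ω ≤ q} = ENNReal.ofReal α := by
    have h1 : (μ {ω | Y ω ≤ q}).toReal = α := by rw [← hFq, hF]
    rw [← h1, ENNReal.ofReal_toReal (measure_ne_top μ _)]
  -- μ {U ≤ q} = μ {Y ≤ q}
  have hUqY : {ω | U ω ≤ q} =ᵐ[μ] {ω | Y ω ≤ q} := by
    refine eventuallyEq_set.mpr ?_
    filter_upwards [hMNAR] with ω hω
    show U ω ≤ q ↔ Y ω ≤ q
    by_cases hr : R ω
    · simp [hU, hr]
    · have hr' : R ω = false := by simpa using hr
      have hyq : Y ω < q := hω hr'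
      simp [hU, hr, hyq.le, hc.le]
  have hUq : μ {ω | U ω ≤ q} = ENNReal.ofReal α := by
    rw [measure_congr hUqY, hYq]
  have hFUq : FU q = α := by
    rw [hFU]
    simp only [hUq, ENNReal.toReal_ofReal hα0.le]
  -- SU nonempty / bddBelow
  have hSUne : {x | α ≤ FU x}.Nonempty := ⟨q, le_of_eq hFUq.symm⟩
  have hSUbd_mem : ∀ x ∈ {x | α ≤ FU x}, c ≤ x := by
    intro x hx
    by_contra hxc
    push_neg at hxc
    have hsub : {ω | U ω ≤ x} ⊆ {ω | Y ω ≤ x} := by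
      intro ω hω
      simp only [mem_setOf_eq, hU] at hω ⊢
      by_cases hr : R ω
      · rwa [if_pos hr] at hω
      · rw [if_neg hr] at hω
        exact absurd hω (not_le.mpr hxc)
    have h2 : FU x ≤ F x := by
      rw [hF, hFU]
      exact ENNReal.toReal_mono (measure_ne_top μ _) (measure_mono hsub)
    have h3 : F x < α := hq_lt x (lt_trans hxc hc)
    rw [mem_setOf_eq] at hx
    linarith
  have hSUbd : BddBelow {x | α ≤ FU x} := ⟨c, hSUbd_mem⟩
  have htc : c ≤ t := le_csInf hSUne hSUbd_mem
  have htq : t ≤ q := csInf_le hSUbd (le_of_eq hFUq.symm)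
  -- FU t = α
  have hFUt_ge : α ≤ FU t := by
    rw [hFUc, htdef]
    unfold quant
    rw [hSUeq] at hSUne hSUbd ⊢
    exact stieltjes_quant_le (cdf νU) α hSUne hSUbd
  have hFUt_le : FU t ≤ α := by
    have hsub : {ω | U ω ≤ t} ⊆ {ω | U ω ≤ q} := fun ω (hω : U ω ≤ t) => le_trans hω htq
    have : FU t ≤ FU q := by
      rw [hFU]
      exact ENNReal.toReal_mono (measure_ne_top μ _) (measure_mono hsub)
    linarith [hFUq ▸ this]
  have hUt : μ {ω | U ω ≤ t} = ENNReal.ofReal α := by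
    have h1 : (μ {ω | U ω ≤ t}).toReal = α := by
      rw [hFU] at hFUt_ge hFUt_le
      exact le_antisymm hFUt_le hFUt_ge
    rw [← h1, ENNReal.ofReal_toReal (measure_ne_top μ _)]
  -- the in-between strip is null
  have hdiff : μ ({ω | U ω ≤ q} \ {ω | U ω ≤ t}) = 0 := by
    have hsub2 : {ω | U ω ≤ t} ⊆ {ω | U ω ≤ q} := fun ω (hω : U ω ≤ t) => le_trans hω htq
    rw [measure_diff hsub2 (hUm measurableSet_Iic).nullMeasurableSet (measure_ne_top μ _),
      hUq, hUt, tsub_self]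
  -- set equality a.e.
  have hsets : {ω | t < U ω} =ᵐ[μ] {ω | q < Y ω} := by
    refine eventuallyEq_set.mpr ?_
    filter_upwards [hMNAR, measure_eq_zero_iff_ae_notMem.mp hdiff] with ω h1 h2
    show t < U ω ↔ q < Y ω
    constructor
    · intro htU
      by_cases hr : R ω
      · have hUY : U ω = Y ω := by simp [hU, hr]
        by_contra hyq
        push_neg at hyq
        exact h2 ⟨show U ω ≤ q by rw [hUY]; exact hyq, show ¬ U ω ≤ t from not_le.mpr htU⟩
      · have hUc : U ω = c := by simp [hU, hr]
        rw [hUc] at htU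
        exact absurd htc (not_le.mpr htU)
    · intro hqY
      by_cases hr : R ω
      · have hUY : U ω = Y ω := by simp [hU, hr]
        rw [hUY]
        exact lt_of_le_of_lt htq hqY
      · have hr' : R ω = false := by simpa using hr
        exact absurd (h1 hr') (not_lt.mpr hqY.le)
  -- conclude
  have hnum : ∫ ω in {ω | t < U ω}, U ω ∂μ = ∫ ω in {ω | q < Y ω}, Y ω ∂μ := by
    have h1 : ∫ ω in {ω | t < U ω}, U ω ∂μ = ∫ ω in {ω | t < U ω}, Y ω ∂μ := by
      refine setIntegral_congr_fun (measurableSet_lt measurable_const hUm) ?_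
      intro ω hω
      have hω : t < U ω := hω
      by_cases hr : R ω
      · simp [hU, hr]
      · have hUc : U ω = c := by simp [hU, hr]
        rw [hUc] at hω
        exact absurd htc (not_le.mpr hω)
    rw [h1, setIntegral_congr_set hsets]
  have hden : μ {ω | t < U ω} = μ {ω | q < Y ω} := measure_congr hsets
  simp only [condMeanAbove]
  rw [hnum, hden]
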